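/- In the setting of Theorem 3 (a GAM p, unbiased linear estimators Ŷ(z), contrast coefficient functions g₁, g₂, and constants R, R_i(z), R_{ii}(z) = g₁(z)g₂(z)B_{ii}(z,z), R_{ii*}(z,z*) = g₁(z)g₂(z*)B_{ii*}(z,z*) for which the covariance representation of Theorem 3 holds for every choice of potential outcomes), let Q = (q_{ii*}) ∈ ℚ and define R̃_{ii*}(z,z*) = g₁(z) g₂(z*) ( B_{ii*}(z,z*) + q_{ii*} − 1/N² ) for i ≠ i*, and C_Q(τ̂_1, τ̂_2) = R + Σ_{z∈Z} Σ_{i=1}^N ( R_i(z) Y_i(z) + R_{ii}(z) Y_i(z)² ) + Σ_{z∈Z} Σ_{z*∈Z} Σ_{i=1}^N Σ_{i*≠i} R̃_{ii*}(z,z*) Y_i(z) Y_{i*}(z*). Then Cov(τ̂_1, τ̂_2) = C_Q(τ̂_1, τ̂_2) − τ_{[1]}′ Q τ_{[2]}, where τ_{[l]} ∈ ℝ^N has entries τ_{l,i} = Σ_z g_l(z) Y_i(z). In particular, if Q(Y(z) − Y(z*)) = 0 for all z, z* ∈ Z, then Cov(τ̂_1, τ̂_2) = C_Q(τ̂_1,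 τ̂_2). -/

import Mathlib

open Finset

/-- Expectation of a statistic `f` under a general assignment mechanism `p`. -/
def expect {N : ℕ} {Z : Type*} [Fintype Z] (p : (Fin N → Z) → ℝ)
    (f : (Fin N → Z) → ℝ) : ℝ :=
  ∑ w : Fin N → Z, p w * f w

/-- Covariance of two statistics `f₁, f₂` under a general assignment mechanism `p`. -/
def covar {N : ℕ} {Z : Type*} [Fintype Z] (p : (Fin N → Z) → ℝ)
    (f₁ f₂ : (Fin N → Z) → ℝ) : ℝ :=
  expect p (fun w => (f₁ w - expect p f₁) * (f₂ w - expect p f₂))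

/-- A linear estimator of the treatment mean `Ȳ(z)`. -/
def linEst {N : ℕ} {Z : Type*} [Fintype Z] [DecidableEq Z]
    (a : (Fin N → Z) → Z → ℝ) (b : (Fin N → Z) → Z → Fin N → ℝ)
    (Y : Fin N → Z → ℝ) (z : Z) (w : Fin N → Z) : ℝ :=
  a w z + ∑ i ∈ univ.filter (fun i => w i = z), b w z i * Y i z

/-- `B_{ii*}(z,z*) = ∑_{w : w(i)=z, w(i*)=z*} p(w) b_i(w,z) b_{i*}(w,z*)`. -/
def Bcoef {N : ℕ} {Z : Type*} [Fintype Z] [DecidableEq Z]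
    (p : (Fin N → Z) → ℝ) (b : (Fin N → Z) → Z → Fin N → ℝ)
    (i iStar : Fin N) (z zStar : Z) : ℝ :=
  ∑ w ∈ univ.filter (fun w : Fin N → Z => w i = z ∧ w iStar = zStar),
    p w * (b w z i * b w zStar iStar)

/-- The quantity `C_Q(τ̂₁, τ̂₂)`, obtained from the covariance representation of
Theorem 3 by replacing `R_{ii*}(z,z*)` with
`R̃_{ii*}(z,z*) = g₁(z)g₂(z*)(B_{ii*}(z,z*) + q_{ii*} − 1/N²)` and dropping
`τ̄₁τ̄₂`. -/
noncomputable def CQ {N : ℕ} {Z : Type*} [Fintype Z] [DecidableEq Z]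
    (p : (Fin N → Z) → ℝ) (b : (Fin N → Z) → Z → Fin N → ℝ)
    (g₁ g₂ : Z → ℝ) (R : ℝ) (Ri : Fin N → Z → ℝ)
    (Q : Matrix (Fin N) (Fin N) ℝ) (Y : Fin N → Z → ℝ) : ℝ :=
  R + ∑ z, ∑ i, (Ri i z * Y i z + g₁ z * g₂ z * Bcoef p b i i z z * (Y i z) ^ 2)
    + ∑ z, ∑ zStar, ∑ i, ∑ iStar ∈ univ.erase i,
        g₁ z * g₂ zStar * (Bcoef p b i iStar z zStar + Q i iStar - 1 / (N : ℝ) ^ 2)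
          * (Y i z * Y iStar zStar)

/-- Covariance decomposition: in the setting of Theorem 3, for any symmetric
psd matrix `Q` with zero row sums and diagonal entries `1/N²`,
`Cov(τ̂₁, τ̂₂) = C_Q(τ̂₁, τ̂₂) − τ_{[1]}′ Q τ_{[2]}`; in particular, if the
generalized additivity condition `Q(Y(z) − Y(z*)) = 0` holds for all
`z, z* ∈ Z`, then `Cov(τ̂₁, τ̂₂) = C_Q(τ̂₁, τ̂₂)`. -/
theorem covariance_decomposition {N : ℕ} {Z : Type*} [Fintype Z] [DecidableEq Z]
    (hN : 2 ≤ N) (hZ : 2 ≤ Fintype.card Z)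
    (p : (Fin N → Z) → ℝ) (hp0 : ∀ w, 0 ≤ p w) (hp1 : ∑ w : Fin N → Z, p w = 1)
    (a : (Fin N → Z) → Z → ℝ) (b : (Fin N → Z) → Z → Fin N → ℝ)
    (hunb : ∀ (Y : Fin N → Z → ℝ) (z : Z),
      expect p (linEst a b Y z) = (∑ i, Y i z) / N)
    (g₁ g₂ : Z → ℝ) (hg₁ne : g₁ ≠ 0) (hg₂ne : g₂ ≠ 0)
    (hg₁0 : ∑ z, g₁ z = 0) (hg₂0 : ∑ z, g₂ z = 0)
    (R : ℝ) (Ri : Fin N → Z → ℝ)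
    (hrep : ∀ Y : Fin N → Z → ℝ,
      covar p (fun w => ∑ z, g₁ z * linEst a b Y z w)
          (fun w => ∑ z, g₂ z * linEst a b Y z w) =
        R + ∑ z, ∑ i, (Ri i z * Y i z + g₁ z * g₂ z * Bcoef p b i i z z * (Y i z) ^ 2)
          + ∑ z, ∑ zStar, ∑ i, ∑ iStar ∈ univ.erase i,
              g₁ z * g₂ zStar * Bcoef p b i iStar z zStar * (Y i z * Y iStar zStar)
          - (∑ z, g₁ z * ((∑ i, Y i z) / N)) * (∑ z, g₂ z * ((∑ i, Y i z) / N)))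
    (Q : Matrix (Fin N) (Fin N) ℝ) (hQ : Q.PosSemidef)
    (hrow : ∀ i, ∑ j, Q i j = 0) (hdiag : ∀ i, Q i i = 1 / (N : ℝ) ^ 2) :
    ∀ Y : Fin N → Z → ℝ,
      covar p (fun w => ∑ z, g₁ z * linEst a b Y z w)
          (fun w => ∑ z, g₂ z * linEst a b Y z w) =
        CQ p b g₁ g₂ R Ri Q Y
          - ∑ i, ∑ iStar, Q i iStar * (∑ z, g₁ z * Y i z) * (∑ z, g₂ z * Y iStar z) ∧
      ((∀ z zStar : Z, Q.mulVec (fun i => Y i z - Y i zStar) = 0) →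
        covar p (fun w => ∑ z, g₁ z * linEst a b Y z w)
            (fun w => ∑ z, g₂ z * linEst a b Y z w) = CQ p b g₁ g₂ R Ri Q Y) := by
  intro Y
  have hNne : (N : ℝ) ≠ 0 := Nat.cast_ne_zero.mpr (by omega)
  set c : ℝ := 1 / (N : ℝ) ^ 2 with hc
  -- generic 4-fold sum swap
  have h1 : ∀ (F : Z → Z → Fin N → Fin N → ℝ),
      (∑ z, ∑ zStar, ∑ i, ∑ iStar ∈ univ.erase i, F z zStar i iStar)
      = ∑ i, ∑ iStar ∈ univ.erase i, ∑ z, ∑ zStar, F z zStar i iStar := by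
    intro F
    calc (∑ z, ∑ zStar, ∑ i, ∑ iStar ∈ univ.erase i, F z zStar i iStar)
        = ∑ z, ∑ i, ∑ zStar, ∑ iStar ∈ univ.erase i, F z zStar i iStar :=
          Finset.sum_congr rfl fun z _ => Finset.sum_comm
      _ = ∑ i, ∑ z, ∑ zStar, ∑ iStar ∈ univ.erase i, F z zStar i iStar :=
          Finset.sum_comm
      _ = ∑ i, ∑ z, ∑ iStar ∈ univ.erase i, ∑ zStar, F z zStar i iStar :=
          Finset.sum_congr rfl fun i _ => Finset.sum_congr rfl fun z _ =>
            Finset.sum_comm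
      _ = ∑ i, ∑ iStar ∈ univ.erase i, ∑ z, ∑ zStar, F z zStar i iStar :=
          Finset.sum_congr rfl fun i _ => Finset.sum_comm
  have inner : ∀ (i iStar : Fin N) (d : ℝ),
      (∑ z, ∑ zStar, g₁ z * g₂ zStar * d * (Y i z * Y iStar zStar))
      = d * ((∑ z, g₁ z * Y i z) * (∑ z, g₂ z * Y iStar z)) := by
    intro i iStar d
    rw [Finset.sum_mul_sum, Finset.mul_sum]
    refine Finset.sum_congr rfl fun z _ => ?_
    rw [Finset.mul_sum]
    exact Finset.sum_congr rfl fun zStar _ => by ring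
  -- the extra term E
  have key : (∑ z, ∑ zStar, ∑ i, ∑ iStar ∈ univ.erase i,
        g₁ z * g₂ zStar * (Q i iStar - c) * (Y i z * Y iStar zStar))
      = (∑ i, ∑ iStar, Q i iStar * (∑ z, g₁ z * Y i z) * (∑ z, g₂ z * Y iStar z))
        - (∑ z, g₁ z * ((∑ i, Y i z) / N)) * (∑ z, g₂ z * ((∑ i, Y i z) / N)) := by
    have htau : ∀ (g : Z → ℝ), (∑ z, g z * ((∑ i, Y i z) / N))
        = (∑ i, ∑ z, g z * Y i z) / N := by
      intro g
      calc (∑ z, g z * ((∑ i, Y i z) / N))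
          = ∑ z, ∑ i, g z * (Y i z / N) := by
            refine Finset.sum_congr rfl fun z _ => ?_
            rw [Finset.sum_div, Finset.mul_sum]
        _ = ∑ i, ∑ z, g z * (Y i z / N) := Finset.sum_comm
        _ = (∑ i, ∑ z, g z * Y i z) / N := by
            rw [Finset.sum_div]
            refine Finset.sum_congr rfl fun i _ => ?_
            rw [Finset.sum_div]
            exact Finset.sum_congr rfl fun z _ => by ring
    rw [h1]
    have step1 : (∑ i, ∑ iStar ∈ univ.erase i, ∑ z, ∑ zStar,
          g₁ z * g₂ zStar * (Q i iStar - c) * (Y i z * Y iStar zStar))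
        = ∑ i, ∑ iStar, (Q i iStar - c)
            * ((∑ z, g₁ z * Y i z) * (∑ z, g₂ z * Y iStar z)) := by
      refine Finset.sum_congr rfl fun i _ => ?_
      simp only [inner]
      rw [Finset.sum_erase_eq_sub (mem_univ i), hdiag i, sub_self, zero_mul, sub_zero]
    rw [step1, htau, htau]
    have expand : ∀ i iStar, (Q i iStar - c)
          * ((∑ z, g₁ z * Y i z) * (∑ z, g₂ z * Y iStar z))
        = Q i iStar * (∑ z, g₁ z * Y i z) * (∑ z, g₂ z * Y iStar z)
          - c * ((∑ z, g₁ z * Y i z) * (∑ z, g₂ z * Y iStar z)) := fun i iStar => by ring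
    simp only [expand, Finset.sum_sub_distrib]
    have hsumprod : (∑ i, ∑ iStar, c * ((∑ z, g₁ z * Y i z) * (∑ z, g₂ z * Y iStar z)))
        = c * ((∑ i, ∑ z, g₁ z * Y i z) * (∑ i, ∑ z, g₂ z * Y i z)) := by
      rw [Finset.sum_mul_sum, Finset.mul_sum]
      refine Finset.sum_congr rfl fun i _ => ?_
      rw [Finset.mul_sum]
    rw [hsumprod, hc]
    field_simp
  -- splitting the fused quadruple sum of CQ
  have split : (∑ z, ∑ zStar, ∑ i, ∑ iStar ∈ univ.erase i,
        g₁ z * g₂ zStar * (Bcoef p b i iStar z zStar + Q i iStar - c)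
          * (Y i z * Y iStar zStar))
      = (∑ z, ∑ zStar, ∑ i, ∑ iStar ∈ univ.erase i,
          g₁ z * g₂ zStar * Bcoef p b i iStar z zStar * (Y i z * Y iStar zStar))
        + (∑ z, ∑ zStar, ∑ i, ∑ iStar ∈ univ.erase i,
          g₁ z * g₂ zStar * (Q i iStar - c) * (Y i z * Y iStar zStar)) := by
    have : (∑ z, ∑ zStar, ∑ i, ∑ iStar ∈ univ.erase i,
          g₁ z * g₂ zStar * (Bcoef p b i iStar z zStar + Q i iStar - c)
            * (Y i z * Y iStar zStar))
        = ∑ z, ∑ zStar, ∑ i, ∑ iStar ∈ univ.erase i,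
            (g₁ z * g₂ zStar * Bcoef p b i iStar z zStar * (Y i z * Y iStar zStar)
              + g₁ z * g₂ zStar * (Q i iStar - c) * (Y i z * Y iStar zStar)) :=
      Finset.sum_congr rfl fun z _ => Finset.sum_congr rfl fun zStar _ =>
        Finset.sum_congr rfl fun i _ => Finset.sum_congr rfl fun iStar _ => by ring
    rw [this]
    simp only [Finset.sum_add_distrib]
  have main : covar p (fun w => ∑ z, g₁ z * linEst a b Y z w)
      (fun w => ∑ z, g₂ z * linEst a b Y z w) =
      CQ p b g₁ g₂ R Ri Q Y
        - ∑ i, ∑ iStar, Q i iStar * (∑ z, g₁ z * Y i z) * (∑ z, g₂ z * Y iStar z) := by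
    rw [hrep Y]
    unfold CQ
    rw [← hc, split, key]
    ring
  refine ⟨main, fun hadd => ?_⟩
  rw [main]
  have hZne : Nonempty Z := Fintype.card_pos_iff.mp (by omega)
  obtain ⟨z0⟩ := hZne
  have hTzero : (∑ i, ∑ iStar, Q i iStar * (∑ z, g₁ z * Y i z)
      * (∑ z, g₂ z * Y iStar z)) = 0 := by
    have hinner : ∀ i : Fin N, (∑ iStar, Q i iStar * (∑ z, g₂ z * Y iStar z)) = 0 := by
      intro i
      have hcol : ∀ z : Z, (∑ iStar, Q i iStar * Y iStar z)
          = ∑ iStar, Q i iStar * Y iStar z0 := by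
        intro z
        have := congrFun (hadd z z0) i
        simp only [Matrix.mulVec, dotProduct, Pi.zero_apply] at this
        have h' : (∑ iStar, (Q i iStar * Y iStar z - Q i iStar * Y iStar z0)) = 0 := by
          rw [← this]
          exact Finset.sum_congr rfl fun j _ => by ring
        rw [Finset.sum_sub_distrib] at h'
        linarith
      calc (∑ iStar, Q i iStar * (∑ z, g₂ z * Y iStar z))
          = ∑ iStar, ∑ z, g₂ z * (Q i iStar * Y iStar z) := by
            refine Finset.sum_congr rfl fun iStar _ => ?_
            rw [Finset.mul_sum]
            exact Finset.sum_congr rfl fun z _ => by ring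
        _ = ∑ z, g₂ z * (∑ iStar, Q i iStar * Y iStar z) := by
            rw [Finset.sum_comm]
            exact Finset.sum_congr rfl fun z _ => by rw [Finset.mul_sum]
        _ = ∑ z, g₂ z * (∑ iStar, Q i iStar * Y iStar z0) := by
            exact Finset.sum_congr rfl fun z _ => by rw [hcol z]
        _ = (∑ z, g₂ z) * (∑ iStar, Q i iStar * Y iStar z0) := by
            rw [Finset.sum_mul]
        _ = 0 := by rw [hg₂0, zero_mul]
    calc (∑ i, ∑ iStar, Q i iStar * (∑ z, g₁ z * Y i z) * (∑ z, g₂ z * Y iStar z))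
        = ∑ i, (∑ z, g₁ z * Y i z) * ∑ iStar, Q i iStar * (∑ z, g₂ z * Y iStar z) := by
          refine Finset.sum_congr rfl fun i _ => ?_
          rw [Finset.mul_sum]
          exact Finset.sum_congr rfl fun iStar _ => by ring
      _ = 0 := by
          simp only [hinner, mul_zero, Finset.sum_const_zero]
  rw [hTzero, sub_zero]
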